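/- arXiv:2603.17517 — 2 statements merged into one kernel-verified Lean document; each statement's English description precedes it below -/
import Mathlib

section
/- Let A be a free abelian group of finite rank and R a finitely generated commutative ℂ-algebra equipped with an A-grading. Then for any subgroup B ≤ A, the graded subalgebra R_B := ⊕_{b ∈ B} R_b is also a finitely generated ℂ-algebra. -/
open Finsupp

/-- Gordan-type lemma: the submonoid of `ι →₀ ℕ` cut out by a subgroup condition
is generated by a finite set. -/
theorem monoid_gordan {ι A : Type*} [Finite ι] [AddCommGroup A]
    (φ : (ι →₀ ℕ) →+ A) (B : AddSubgroup A) :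
    ∃ C : Set (ι →₀ ℕ), C.Finite ∧ (∀ m ∈ C, φ m ∈ B) ∧
      ∀ m, φ m ∈ B → m ∈ AddSubmonoid.closure C := by
  classical
  set M : Set (ι →₀ ℕ) := {m | φ m ∈ B} with hM
  set C : Set (ι →₀ ℕ) := {m | m ∈ M ∧ m ≠ 0 ∧ ∀ k ∈ M, k ≠ 0 → k ≤ m → k = m} with hC
  have hwf : WellFounded ((· < ·) : (ι →₀ ℕ) → (ι →₀ ℕ) → Prop) :=
    (Set.isWF_univ_iff.mp (Set.isPWO_of_wellQuasiOrderedLE _).isWF).wf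
  refine ⟨C, ?_, fun m hm => hm.1, ?_⟩
  · have hanti : IsAntichain (· ≤ ·) C := by
      intro x hx y hy hxy hle
      exact hxy (hy.2.2 x hx.1 hx.2.1 hle)
    exact hanti.finite_of_partiallyWellOrderedOn (Set.isPWO_of_wellQuasiOrderedLE C)
  · intro m hm
    induction m using hwf.induction with
    | _ m IH =>
    by_cases hm0 : m = 0
    · simpa [hm0] using (AddSubmonoid.closure C).zero_mem
    · -- find a minimal element `c ≤ m`
      obtain ⟨c, ⟨hcM, hc0, hcm⟩, hmin⟩ :=
        hwf.has_min {k | k ∈ M ∧ k ≠ 0 ∧ k ≤ m} ⟨m, hm, hm0, le_rfl⟩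
      have hcC : c ∈ C := by
        refine ⟨hcM, hc0, fun k hkM hk0 hkc => ?_⟩
        exact (hkc.lt_or_eq.resolve_left (hmin k ⟨hkM, hk0, hkc.trans hcm⟩)).symm ▸ rfl
      have hsub : m - c + c = m := tsub_add_cancel_of_le hcm
      have hφ : φ (m - c) ∈ B := by
        have h1 : φ (m - c) + φ c = φ m := by rw [← map_add, hsub]
        have : φ (m - c) = φ m - φ c := eq_sub_of_add_eq h1
        rw [this]; exact B.sub_mem hm hcM
      have hlt : m - c < m := by
        refine lt_of_le_of_ne tsub_le_self fun h => hc0 ?_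
        rw [h] at hsub
        exact (left_eq_add.mp hsub.symm)
      have h1 := IH (m - c) hlt hφ
      have h2 := AddSubmonoid.subset_closure hcC
      rw [← hsub]
      exact (AddSubmonoid.closure C).add_mem h1 h2

/-- If `R` is a finitely generated commutative `ℂ`-algebra graded by a
free abelian group `A` of finite rank, and `B ≤ A` is a subgroup, then the graded
subalgebra `R_B = ⊕_{b ∈ B} R_b` is a finitely generated `ℂ`-algebra. -/
theorem graded_subalgebra_finiteType
    (A : Type*) [AddCommGroup A] [DecidableEq A]
    [Module.Free ℤ A] [Module.Finite ℤ A]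
    (R : Type*) [CommRing R] [Algebra ℂ R] [Algebra.FiniteType ℂ R]
    (ℳ : A → Submodule ℂ R) [GradedAlgebra ℳ]
    (B : AddSubgroup A)
    (S : Subalgebra ℂ R)
    (hS : (S : Set R) =
      {r : R | ∀ a : A, a ∉ B → (DirectSum.decompose ℳ r a : R) = 0}) :
    Algebra.FiniteType ℂ S := by
  classical
  -- finitely many generators of R
  obtain ⟨s, hs⟩ := (Algebra.FiniteType.out : (⊤ : Subalgebra ℂ R).FG)
  -- degrees appearing in generators
  set F : Finset A := s.sup fun t => DFinsupp.support (DirectSum.decompose ℳ t) with hF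
  -- homogeneous generators
  set ι := ↥s × ↥F with hι
  set g : ι → R := fun p => (DirectSum.decompose ℳ (p.1 : R) (p.2 : A) : R) with hg
  set d : ι → A := fun p => (p.2 : A) with hd
  have hdg : ∀ i : ι, g i ∈ ℳ (d i) := fun i => SetLike.coe_mem _
  have hgen : Algebra.adjoin ℂ (Set.range g) = ⊤ := by
    refine le_antisymm le_top ?_
    rw [← hs]
    apply Algebra.adjoin_le
    intro t ht
    rw [← DirectSum.sum_support_decompose ℳ t]
    apply Subalgebra.sum_mem
    intro a ha
    have haF : a ∈ F := Finset.mem_sup.mpr ⟨t, ht, ha⟩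
    exact Algebra.subset_adjoin ⟨(⟨t, ht⟩, ⟨a, haF⟩), rfl⟩
  -- the degree homomorphism
  set φ : (ι →₀ ℕ) →+ A := Finsupp.liftAddHom fun i => (smulAddHom ℕ A).flip (d i) with hφ
  have hφ_apply : ∀ m : ι →₀ ℕ, φ m = ∑ i ∈ m.support, m i • d i := fun m => rfl
  -- monomials
  set gm : (ι →₀ ℕ) → R := fun m => m.prod fun i k => g i ^ k with hgm
  have hgm_mul : ∀ m m' : ι →₀ ℕ, gm (m + m') = gm m * gm m' := fun m m' =>
    Finsupp.prod_add_index' (fun i => pow_zero _) (fun i k l => pow_add _ _ _)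
  have hgm_zero : gm 0 = 1 := Finsupp.prod_zero_index
  have hgm_mem : ∀ m : ι →₀ ℕ, gm m ∈ ℳ (φ m) := by
    intro m
    rw [hφ_apply]
    exact SetLike.prod_pow_mem_graded ℳ d g m fun i _ => hdg i
  obtain ⟨C, hCfin, hCB, hCgen⟩ := monoid_gordan φ B
  set V : Subalgebra ℂ R := Algebra.adjoin ℂ (gm '' C) with hV
  have hgmV : ∀ m : ι →₀ ℕ, φ m ∈ B → gm m ∈ V := by
    intro m hm
    refine AddSubmonoid.closure_induction (motive := fun m _ => gm m ∈ V)
      (fun x hx => Algebra.subset_adjoin ⟨x, hx, rfl⟩)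
      (show gm 0 ∈ V by rw [hgm_zero]; exact V.one_mem)
      (fun x y _ _ hx hy => show gm (x + y) ∈ V by
        rw [hgm_mul]; exact V.mul_mem hx hy) (hCgen m hm)
  -- every homogeneous component of degree in B lies in V
  have hcomp : ∀ r : R, ∀ a : A, a ∈ B → (DirectSum.decompose ℳ r a : R) ∈ V := by
    intro r a haB
    obtain ⟨p, hp⟩ : ∃ p : MvPolynomial ι ℂ, MvPolynomial.aeval g p = r := by
      have : (MvPolynomial.aeval g : MvPolynomial ι ℂ →ₐ[ℂ] R).range = ⊤ := by
        rw [← Algebra.adjoin_range_eq_range_aeval, hgen]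
      exact (AlgHom.mem_range _).mp (this ▸ Algebra.mem_top (A := R) (R := ℂ))
    have hr : r = ∑ m ∈ p.support, algebraMap ℂ R (p.coeff m) * gm m := by
      rw [← hp, MvPolynomial.aeval_def, MvPolynomial.eval₂_eq]
      rfl
    rw [hr, DirectSum.decompose_sum, DFinsupp.finset_sum_apply,
      AddSubmonoidClass.coe_finset_sum]
    apply Subalgebra.sum_mem
    intro m _
    have hterm : algebraMap ℂ R (p.coeff m) * gm m ∈ ℳ (φ m) := by
      rw [← Algebra.smul_def]
      exact (ℳ (φ m)).smul_mem _ (hgm_mem m)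
    by_cases hma : φ m = a
    · rw [← hma, DirectSum.decompose_of_mem_same ℳ hterm]
      exact V.mul_mem (V.algebraMap_mem _) (hgmV m (hma ▸ haB))
    · rw [DirectSum.decompose_of_mem_ne ℳ hterm hma]
      exact V.zero_mem
  -- S = V
  have hSV : S = V := by
    apply le_antisymm
    · intro r hr
      rw [← DirectSum.sum_support_decompose ℳ r]
      apply Subalgebra.sum_mem
      intro a _
      by_cases haB : a ∈ B
      · exact hcomp r a haB
      · have hr' : r ∈ (S : Set R) := hr
        rw [hS] at hr'
        rw [hr' a haB]; exact V.zero_mem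
    · apply Algebra.adjoin_le
      rintro _ ⟨m, hm, rfl⟩
      have hmB : φ m ∈ B := hCB m hm
      have : gm m ∈ (S : Set R) := by
        rw [hS]
        intro a haB
        exact DirectSum.decompose_of_mem_ne ℳ (hgm_mem m) (fun h => haB (h ▸ hmB))
      exact this
  have hSFG : S.FG := by
    refine ⟨(hCfin.image gm).toFinset, ?_⟩
    rw [Set.Finite.coe_toFinset, hSV]
  exact (Subalgebra.fg_iff_finiteType S).mp hSFG
end

section
/- Let R be a finitely generated commutative ℂ-algebra graded by ℤⁿ, and let B ≤ ℤⁿ be a subgroup. Then the degree-zero part R_0 := R_{(0)} (the homogeneous component of degree 0) is a finitely generated ℂ-algebra. -/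
open Finset in
/-- Gordan-style lemma: a subset of `κ → ℕ` (κ finite) closed under subtraction of
smaller members admits a finite additive generating set. -/
lemma aux_gordan {κ : Type*} [Finite κ] (M : Set (κ → ℕ))
    (hsub : ∀ a t : κ → ℕ, a ∈ M → t ∈ M → t ≤ a → a - t ∈ M) :
    ∃ T : Set (κ → ℕ), T.Finite ∧ T ⊆ M ∧ M ⊆ ↑(AddSubmonoid.closure T) := by
  cases nonempty_fintype κ
  classical
  set T : Set (κ → ℕ) := {t | t ∈ M ∧ t ≠ 0 ∧ ∀ b ∈ M, b ≠ 0 → b ≤ t → b = t} with hT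
  have hTM : T ⊆ M := fun t ht => ht.1
  have hanti : IsAntichain (· ≤ ·) T := fun a ha b hb hne hle =>
    hne (hb.2.2 a ha.1 ha.2.1 hle)
  have hfin : T.Finite := hanti.finite_of_partiallyWellOrderedOn (Set.isPWO_of_wellQuasiOrderedLE T)
  refine ⟨T, hfin, hTM, ?_⟩
  suffices h : ∀ N : ℕ, ∀ a : κ → ℕ, (∑ i, a i) ≤ N → a ∈ M →
      a ∈ AddSubmonoid.closure T by
    intro a ha
    exact h (∑ i, a i) a le_rfl ha
  intro N
  induction N with
  | zero =>
    intro a hle ha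
    have : a = 0 := by
      funext i
      exact (Finset.sum_eq_zero_iff.mp (Nat.le_zero.mp hle)) i (Finset.mem_univ i)
    rw [this]
    exact zero_mem _
  | succ N ih =>
    intro a hle ha
    by_cases ha0 : a = 0
    · rw [ha0]; exact zero_mem _
    · -- find a minimal nonzero element of M below a
      set A : Set (κ → ℕ) := {b | b ∈ M ∧ b ≠ 0 ∧ b ≤ a} with hA
      have haA : a ∈ A := ⟨ha, ha0, le_rfl⟩
      have hwf := (Set.isPWO_of_wellQuasiOrderedLE A).isWF
      rw [Set.IsWF, Set.wellFoundedOn_iff] at hwf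
      obtain ⟨t, htA, htmin⟩ := hwf.has_min A ⟨a, haA⟩
      have htT : t ∈ T := by
        refine ⟨htA.1, htA.2.1, fun b hb hb0 hble => ?_⟩
        have hbA : b ∈ A := ⟨hb, hb0, hble.trans htA.2.2⟩
        by_contra hne
        exact htmin b hbA ⟨lt_of_le_of_ne hble hne, hbA, htA⟩
      have hta : t ≤ a := htA.2.2
      have hsubM : a - t ∈ M := hsub a t ha htA.1 hta
      have hadd : (a - t) + t = a := by
        funext i
        exact Nat.sub_add_cancel (hta i)
      have htpos : 0 < ∑ i, t i := by
        rcases Function.ne_iff.mp htA.2.1 with ⟨i, hi⟩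
        exact Finset.sum_pos' (fun j _ => Nat.zero_le _)
          ⟨i, Finset.mem_univ i, Nat.pos_of_ne_zero hi⟩
      have hsum : (∑ i, (a - t) i) ≤ N := by
        have : (∑ i, (a - t) i) + (∑ i, t i) = ∑ i, a i := by
          rw [← Finset.sum_add_distrib]
          exact Finset.sum_congr rfl fun i _ => by
            have := congrFun hadd i; simpa using this
        omega
      have h1 := ih (a - t) hsum hsubM
      have := AddSubmonoid.add_mem _ h1 (AddSubmonoid.subset_closure htT)
      rwa [hadd] at this


/-- If `R` is a finitely generated commutative `ℂ`-algebra graded by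
`ℤⁿ` (and `B ≤ ℤⁿ` is any subgroup), then the degree-zero homogeneous component
`R_0` is a finitely generated `ℂ`-algebra. -/
theorem degree_zero_part_finiteType
    (n : ℕ)
    (R : Type*) [CommRing R] [Algebra ℂ R] [Algebra.FiniteType ℂ R]
    (ℳ : (Fin n → ℤ) → Submodule ℂ R) [GradedAlgebra ℳ]
    (B : AddSubgroup (Fin n → ℤ)) :
    ∃ S : Subalgebra ℂ R, (S : Set R) = (ℳ 0 : Set R) ∧ Algebra.FiniteType ℂ S := by
  classical
  obtain ⟨s, hs⟩ := (inferInstance : Algebra.FiniteType ℂ R).1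
  -- a finite family of homogeneous generators
  set κ : Finset ((_ : R) × (Fin n → ℤ)) :=
    s.sigma (fun r => (DirectSum.decompose ℳ r).support) with hκ
  set x : ↥κ → R := fun e => (DirectSum.decompose ℳ e.1.1 e.1.2 : R) with hxdef
  set d : ↥κ → (Fin n → ℤ) := fun e => e.1.2 with hddef
  have hx : ∀ e, x e ∈ ℳ (d e) := fun e => SetLike.coe_mem _
  have hgen : Algebra.adjoin ℂ (Set.range x) = ⊤ := by
    rw [eq_top_iff, ← hs]
    apply Algebra.adjoin_le
    intro r hr
    rw [← DirectSum.sum_support_decompose ℳ r]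
    apply Subalgebra.sum_mem
    intro i hi
    exact Algebra.subset_adjoin ⟨⟨⟨r, i⟩, Finset.mem_sigma.mpr ⟨hr, hi⟩⟩, rfl⟩
  -- monomials and their degrees
  set mono : (↥κ → ℕ) → R := fun a => ∏ i, x i ^ a i with hmonodef
  set deg : (↥κ → ℕ) → (Fin n → ℤ) := fun a => ∑ i, a i • d i with hdegdef
  have hmono_mem : ∀ a, mono a ∈ ℳ (deg a) := fun a =>
    SetLike.prod_pow_mem_graded ℳ d x a fun k _ => hx k
  have mono_zero : mono 0 = 1 := by simp [hmonodef]
  have mono_add : ∀ a b, mono (a + b) = mono a * mono b := by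
    intro a b
    simp [hmonodef, pow_add, Finset.prod_mul_distrib]
  have deg_add : ∀ a b, deg (a + b) = deg a + deg b := by
    intro a b
    show (∑ i, ((a + b) i) • d i) = (∑ i, a i • d i) + ∑ i, b i • d i
    rw [← Finset.sum_add_distrib]
    exact Finset.sum_congr rfl fun i _ => by rw [Pi.add_apply, add_smul]
  have mono_single : ∀ e : ↥κ, mono (Pi.single e 1) = x e := by
    intro e
    show (∏ i, x i ^ (Pi.single e 1 : ↥κ → ℕ) i) = x e
    rw [Finset.prod_eq_single e (fun j _ hj => by
      rw [Pi.single_eq_of_ne hj, pow_zero]) (fun h => absurd (Finset.mem_univ e) h)]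
    rw [Pi.single_eq_same, pow_one]
  -- the degree-zero monoid
  set M : Set (↥κ → ℕ) := {a | deg a = 0} with hM
  have hsub : ∀ a t : ↥κ → ℕ, a ∈ M → t ∈ M → t ≤ a → a - t ∈ M := by
    intro a t haM htM hta
    have hadd : (a - t) + t = a := by
      funext i
      exact Nat.sub_add_cancel (hta i)
    have h := deg_add (a - t) t
    rw [hadd, haM, htM, add_zero] at h
    exact h.symm
  obtain ⟨T, hTfin, hTM, hMT⟩ := aux_gordan M hsub
  -- degree-zero monomials lie in the adjoin of the monomials from T
  have hmonoT : ∀ a ∈ AddSubmonoid.closure T, mono a ∈ Algebra.adjoin ℂ (mono '' T) := by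
    intro a haC
    induction haC using AddSubmonoid.closure_induction with
    | mem t ht => exact Algebra.subset_adjoin ⟨t, ht, rfl⟩
    | zero => rw [mono_zero]; exact one_mem _
    | add u v hu hv hpu hpv =>
        rw [mono_add]
        exact mul_mem hpu hpv
  -- the projection onto degree zero as a `ℂ`-linear map
  set π₀ : R →ₗ[ℂ] R :=
    { toFun := fun r => ((DirectSum.decompose ℳ r) 0 : R)
      map_add' := fun a b => by simp
      map_smul' := fun c a => by simp [DirectSum.smul_apply] } with hπdef
  have hπ_mono : ∀ a, π₀ (mono a) = if deg a = 0 then mono a else 0 := by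
    intro a
    by_cases h : deg a = 0
    · rw [if_pos h]
      exact DirectSum.decompose_of_mem_same ℳ (h ▸ hmono_mem a)
    · rw [if_neg h]
      exact DirectSum.decompose_of_mem_ne ℳ (hmono_mem a) h
  -- the closure of the generators consists of monomials
  have hclos : (Submonoid.closure (Set.range x) : Set R) ⊆ Set.range mono := by
    intro y hy
    induction hy using Submonoid.closure_induction with
    | mem z hz =>
        obtain ⟨e, rfl⟩ := hz
        exact ⟨Pi.single e 1, mono_single e⟩
    | one => exact ⟨0, mono_zero⟩
    | mul u v hu hv hpu hpv =>
        obtain ⟨a, rfl⟩ := hpu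
        obtain ⟨b, rfl⟩ := hpv
        exact ⟨a + b, mono_add a b⟩
  -- the grade-zero subalgebra
  refine ⟨SetLike.GradeZero.subalgebra ℳ, rfl, ?_⟩
  rw [← Subalgebra.fg_iff_finiteType, Subalgebra.fg_def]
  refine ⟨mono '' T, hTfin.image _, le_antisymm ?_ ?_⟩
  · apply Algebra.adjoin_le
    rintro r ⟨a, haT, rfl⟩
    show mono a ∈ ℳ 0
    have := hmono_mem a
    rwa [hTM haT] at this
  · intro r hr
    have hr0 : r ∈ ℳ 0 := hr
    have hπr : π₀ r = r := DirectSum.decompose_of_mem_same ℳ hr0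
    have hrspan : r ∈ Submodule.span ℂ (Set.range mono) := by
      have h1 : r ∈ Subalgebra.toSubmodule (Algebra.adjoin ℂ (Set.range x)) := by
        rw [hgen]; trivial
      rw [Algebra.adjoin_eq_span] at h1
      exact Submodule.span_mono hclos h1
    have : π₀ r ∈ Submodule.map π₀ (Submodule.span ℂ (Set.range mono)) :=
      Submodule.mem_map_of_mem hrspan
    rw [Submodule.map_span, hπr] at this
    have hsub2 : π₀ '' Set.range mono ⊆
        (Subalgebra.toSubmodule (Algebra.adjoin ℂ (mono '' T)) : Set R) := by
      rintro y ⟨z, ⟨a, rfl⟩, rfl⟩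
      rw [hπ_mono a]
      by_cases h : deg a = 0
      · rw [if_pos h]
        exact hmonoT a (hMT h)
      · rw [if_neg h]
        exact zero_mem _
    exact Submodule.span_le.mpr hsub2 this
end
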